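/- For every i ∈ [n] and y ∈ PE_n, the meet and join of x_i with y inside the lattice PE_n agree with the meet and join computed in NC_n: x_i ∧_PE y = x_i ∧_NC y and x_i ∨_PE y = x_i ∨_NC y. -/

import Mathlib

/-- A set partition of `[n]` (as a setoid on `Fin n`) is noncrossing. -/
def IsNoncrossing {n : ℕ} (x : Setoid (Fin n)) : Prop :=
  ∀ i j k l : Fin n, i < j → j < k → k < l → x.r i k → x.r j l → x.r i j

/-- `B` is a block of the set partition `x`. -/
def IsBlock {n : ℕ} (x : Setoid (Fin n)) (B : Set (Fin n)) : Prop :=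
  ∃ a, B = {b | x.r a b}

/-- The set partition whose unique (possibly) non-singleton block is `S`. -/
def blockSetoid {n : ℕ} (S : Set (Fin n)) : Setoid (Fin n) where
  r a b := a = b ∨ (a ∈ S ∧ b ∈ S)
  iseqv := by
    refine ⟨fun _ => Or.inl rfl, ?_, ?_⟩
    · rintro a b (rfl | ⟨h1, h2⟩)
      · exact Or.inl rfl
      · exact Or.inr ⟨h2, h1⟩
    · rintro a b c (rfl | ⟨h1, h2⟩) h
      · exact h
      · rcases h with rfl | ⟨h3, h4⟩
        · exact Or.inr ⟨h1, h2⟩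
        · exact Or.inr ⟨h1, h4⟩

/-- The element `x_i` of the left-modular chain: its unique non-singleton block is
`[i-1] ∪ {n}` (in 1-based terms), i.e. the elements with value `< i-1` or value `n-1`. -/
def xChain (n i : ℕ) : Setoid (Fin n) :=
  blockSetoid {a : Fin n | a.val + 1 < i ∨ a.val = n - 1}

/-- The noncrossing closure: the smallest noncrossing partition above `x`. -/
def ncClosure {n : ℕ} (x : Setoid (Fin n)) : Setoid (Fin n) :=
  sInf {y | IsNoncrossing y ∧ x ≤ y}

/-- The join of two noncrossing partitions in `NC_n`. -/
def joinNC {n : ℕ} (x y : Setoid (Fin n)) : Setoid (Fin n) :=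
  ncClosure (x ⊔ y)

/-- The join of a set of noncrossing partitions in `NC_n`. -/
def joinSetNC {n : ℕ} (X : Set (Setoid (Fin n))) : Setoid (Fin n) :=
  ncClosure (sSup X)

/-- Membership in `PE_n`: noncrossing, `{n-1, n}` is not a block, and it is not the case
that `{n}` is a singleton block while `1 ∼ n-1`. -/
def PEmem {n : ℕ} (x : Setoid (Fin n)) : Prop :=
  IsNoncrossing x ∧
  ¬ IsBlock x {a : Fin n | a.val = n - 2 ∨ a.val = n - 1} ∧
  ¬ (IsBlock x {a : Fin n | a.val = n - 1} ∧
      ∃ a b : Fin n, a.val = 0 ∧ b.val = n - 2 ∧ x.r a b)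

/-- `m` is the meet of `x` and `y` in the poset `PE_n`. -/
def IsMeetPE {n : ℕ} (x y m : Setoid (Fin n)) : Prop :=
  PEmem m ∧ m ≤ x ∧ m ≤ y ∧ ∀ z, PEmem z → z ≤ x → z ≤ y → z ≤ m

/-- `j` is the join of `x` and `y` in the poset `PE_n`. -/
def IsJoinPE {n : ℕ} (x y j : Setoid (Fin n)) : Prop :=
  PEmem j ∧ x ≤ j ∧ y ≤ j ∧ ∀ z, PEmem z → x ≤ z → y ≤ z → j ≤ z

/-- `x ⋖ y` in `PE_n`. -/
def CovPE {n : ℕ} (x y : Setoid (Fin n)) : Prop :=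
  PEmem x ∧ PEmem y ∧ x < y ∧ ∀ z, PEmem z → x < z → ¬ z < y

/-- The atoms of `NC_n`: partitions `a_{i,j}` with unique non-singleton block `{i, j}`. -/
def IsAtomNC {n : ℕ} (a : Setoid (Fin n)) : Prop :=
  ∃ i j : Fin n, i < j ∧ a = blockSetoid {i, j}

/-- The partial order `≼` on atoms of `NC_n` induced by the classes
`A_j = {a : a ≤ x_j and a ≰ x_{j-1}}`. -/
def atomPrec {n : ℕ} (a b : Setoid (Fin n)) : Prop :=
  ∃ i j : ℕ, 1 ≤ i ∧ i < j ∧ j ≤ n - 1 ∧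
    (a ≤ xChain n i ∧ ¬ a ≤ xChain n (i - 1)) ∧
    (b ≤ xChain n j ∧ ¬ b ≤ xChain n (j - 1))

/-- A set of atoms of `NC_n` is bounded below (BB). -/
def IsBBset {n : ℕ} (X : Set (Setoid (Fin n))) : Prop :=
  ∀ d ∈ X, ∃ a, IsAtomNC a ∧ atomPrec a d ∧ a < joinSetNC X

/-- A set of atoms of `NC_n` is NBB: no nonempty subset is bounded below. -/
def IsNBBset {n : ℕ} (X : Set (Setoid (Fin n))) : Prop :=
  ∀ Y ⊆ X, Y.Nonempty → ¬ IsBBset Y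

/-- `X` is an NBB base for the top element of `NC_n`. -/
def IsNBBBaseTop {n : ℕ} (X : Set (Setoid (Fin n))) : Prop :=
  (∀ a ∈ X, IsAtomNC a) ∧ IsNBBset X ∧ joinSetNC X = ⊤

/-- The graph `τ(X)` on vertex set `[n]` associated with a set `X` of atoms:
`i` and `j` are adjacent iff `a_{i,j} ∈ X`. -/
def atomGraph {n : ℕ} (X : Set (Setoid (Fin n))) : SimpleGraph (Fin n) where
  Adj i j := i ≠ j ∧ blockSetoid ({i, j} : Set (Fin n)) ∈ X
  symm := ⟨by
    rintro i j ⟨hne, hm⟩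
    exact ⟨hne.symm, by rwa [Set.pair_comm]⟩⟩
  loopless := ⟨fun i h => h.1 rfl⟩

/-- The parking label of the cover `x ⋖ y` is `p`: `y` merges blocks `B₁, B₂` of `x` with
`min B₁ < min B₂`, and `p = max { j ∈ B₁ : j ≤ i for all i ∈ B₂ }`. -/
def ParkingLabelIs {n : ℕ} (x y : Setoid (Fin n)) (p : Fin n) : Prop :=
  ∃ B₁ B₂ : Set (Fin n), IsBlock x B₁ ∧ IsBlock x B₂ ∧ B₁ ≠ B₂ ∧
    IsBlock y (B₁ ∪ B₂) ∧
    (∃ a ∈ B₁, ∀ b ∈ B₂, a < b) ∧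
    p ∈ B₁ ∧ (∀ i ∈ B₂, p ≤ i) ∧ (∀ j ∈ B₁, (∀ i ∈ B₂, j ≤ i) → j ≤ p)

/-- The label of the cover `w ⋖ z` in the `S_n` EL-labeling of `PE_n` coming from the
left-modular chain: `λ(w,z) = min { i-1 : x_i ≰ w and x_i ≤ z }`. -/
def LabelIs (n : ℕ) (w z : Setoid (Fin n)) (v : ℕ) : Prop :=
  ∃ i : ℕ, 1 ≤ i ∧ i ≤ n ∧ i - 1 = v ∧ (¬ xChain n i ≤ w ∧ xChain n i ≤ z) ∧
    ∀ j : ℕ, 1 ≤ j → j ≤ n → (¬ xChain n j ≤ w ∧ xChain n j ≤ z) → i ≤ j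

/-- The sequence of edge labels along a (saturated) chain, recorded as a list. -/
def chainLabels {α Λ : Type*} (lab : α → α → Λ) (c : List α) : List Λ :=
  List.zipWith lab c c.tail

/-- `c` is a saturated chain from `a` to `b` with respect to the cover relation `cov`. -/
def IsSatChainList {α : Type*} (cov : α → α → Prop) (a b : α) (c : List α) : Prop :=
  c.head? = some a ∧ c.getLast? = some b ∧ c.Chain' cov

/-- A chain is rising if its label sequence is strictly increasing. -/
def RisingChain {α Λ : Type*} [LT Λ] (lab : α → α → Λ) (c : List α) : Prop :=
  (chainLabels lab c).Chain' (· < ·)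

/-- `lab` is an EL-labeling with respect to the cover relation `cov` and order `le`:
every interval has a unique rising maximal chain, which is lexicographically least. -/
def IsELLabeling {α Λ : Type*} [PartialOrder Λ] (cov : α → α → Prop) (le : α → α → Prop)
    (lab : α → α → Λ) : Prop :=
  ∀ a b, le a b → ∃ c : List α, IsSatChainList cov a b c ∧ RisingChain lab c ∧
    (∀ c', IsSatChainList cov a b c' → RisingChain lab c' → c' = c) ∧
    (∀ c', IsSatChainList cov a b c' → c' ≠ c →
      List.Lex (· < ·) (chainLabels lab c) (chainLabels lab c'))

section Aux

variable {n : ℕ}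

lemma blockSetoid_rel {S : Set (Fin n)} {a b : Fin n} :
    (blockSetoid S).r a b ↔ a = b ∨ (a ∈ S ∧ b ∈ S) := Iff.rfl

lemma xChain_rel {i : ℕ} {a b : Fin n} :
    (xChain n i).r a b ↔
      a = b ∨ ((a.val + 1 < i ∨ a.val = n - 1) ∧ (b.val + 1 < i ∨ b.val = n - 1)) :=
  Iff.rfl

lemma blockSetoid_nc (S : Set (Fin n)) : IsNoncrossing (blockSetoid S) := by
  intro i j k l hij hjk hkl hik hjl
  rcases hik with rfl | ⟨hi, _⟩
  · exact absurd (hij.trans hjk) (lt_irrefl _)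
  rcases hjl with rfl | ⟨hj, _⟩
  · exact absurd (hjk.trans hkl) (lt_irrefl _)
  exact Or.inr ⟨hi, hj⟩

lemma nc_inf {x y : Setoid (Fin n)} (hx : IsNoncrossing x) (hy : IsNoncrossing y) :
    IsNoncrossing (x ⊓ y) := by
  intro i j k l h1 h2 h3 hik hjl
  exact ⟨hx i j k l h1 h2 h3 hik.1 hjl.1, hy i j k l h1 h2 h3 hik.2 hjl.2⟩

lemma sInf_rel {S : Set (Setoid (Fin n))} {a b : Fin n} :
    (sInf S).r a b ↔ ∀ z ∈ S, z.r a b := Iff.rfl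

lemma ncClosure_nc (x : Setoid (Fin n)) : IsNoncrossing (ncClosure x) := by
  intro i j k l h1 h2 h3 hik hjl z hz
  exact hz.1 i j k l h1 h2 h3 (hik z hz) (hjl z hz)

lemma le_ncClosure (x : Setoid (Fin n)) : x ≤ ncClosure x :=
  le_sInf fun _ hz => hz.2

lemma ncClosure_le {x z : Setoid (Fin n)} (h1 : IsNoncrossing z) (h2 : x ≤ z) :
    ncClosure x ≤ z := sInf_le ⟨h1, h2⟩

end Aux

/-- For `i ∈ [n]` and `y ∈ PE_n`, the meet and join of `x_i` and `y` in
`PE_n` agree with those computed in `NC_n`: the `NC_n`-meet `x_i ⊓ y` is the meet of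
`x_i` and `y` in `PE_n`, and the `NC_n`-join `joinNC x_i y` is their join in `PE_n`. -/
theorem PE_meet_join_xChain (n : ℕ) (hn : 3 ≤ n) (i : ℕ) (h1 : 1 ≤ i) (h2 : i ≤ n)
    (y : Setoid (Fin n)) (hy : PEmem y) :
    IsMeetPE (xChain n i) y (xChain n i ⊓ y) ∧
    IsJoinPE (xChain n i) y (joinNC (xChain n i) y) := by
  set f0 : Fin n := ⟨0, by omega⟩ with hf0
  set fn2 : Fin n := ⟨n - 2, by omega⟩ with hfn2
  set fn1 : Fin n := ⟨n - 1, by omega⟩ with hfn1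
  have hxnc : IsNoncrossing (xChain n i) := blockSetoid_nc _
  constructor
  · -- meet
    refine ⟨?_, inf_le_left, inf_le_right, fun z _ hz1 hz2 => le_inf hz1 hz2⟩
    by_cases hin : i = n
    · -- x_n = ⊤, so the meet is y
      have hall : ∀ a b : Fin n, (xChain n i).r a b := by
        intro a b
        have ha := a.isLt
        have hb := b.isLt
        exact xChain_rel.mpr (Or.inr ⟨by omega, by omega⟩)
      have hm : xChain n i ⊓ y = y :=
        le_antisymm inf_le_right
          (le_inf (Setoid.le_def.mpr fun {a b} _ => hall a b) le_rfl)
      rw [hm]; exact hy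
    · have hin' : i < n := lt_of_le_of_ne h2 hin
      refine ⟨nc_inf hxnc hy.1, ?_, ?_⟩
      · rintro ⟨a, hB⟩
        have h2m : fn2 ∈ {b | (xChain n i ⊓ y).r a b} := by
          rw [← hB]; exact Or.inl rfl
        have h1m : fn1 ∈ {b | (xChain n i ⊓ y).r a b} := by
          rw [← hB]; exact Or.inr rfl
        have hrel : (xChain n i ⊓ y).r fn2 fn1 :=
          (xChain n i ⊓ y).trans' ((xChain n i ⊓ y).symm' h2m) h1m
        have hx : (xChain n i).r fn2 fn1 := hrel.1
        rcases xChain_rel.mp hx with h | ⟨h, -⟩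
        · have : (fn2 : Fin n).val = fn1.val := by rw [h]
          simp only [hfn2, hfn1] at this; omega
        · simp only [hfn2] at h; omega
      · rintro ⟨-, a, b, ha, hb, hr⟩
        have hx : (xChain n i).r a b := hr.1
        rcases xChain_rel.mp hx with h | ⟨-, hbS⟩
        · rw [h] at ha; omega
        · rw [hb] at hbS; omega
  · -- join
    by_cases hi1 : i = 1
    · subst hi1
      have hx1 : ∀ z : Setoid (Fin n), xChain n 1 ≤ z := by
        intro z
        refine Setoid.le_def.mpr ?_
        intro a b hab
        rcases xChain_rel.mp hab with rfl | ⟨ha, hb⟩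
        · exact z.refl' a
        · have : a = b := Fin.ext (by omega)
          subst this; exact z.refl' a
      have hj : joinNC (xChain n 1) y = y := by
        refine le_antisymm (ncClosure_le hy.1 (sup_le (hx1 y) le_rfl)) ?_
        exact le_trans le_sup_right (le_ncClosure _)
      rw [hj]
      exact ⟨hy, hx1 y, le_rfl, fun z _ _ h => h⟩
    · have hi2 : 2 ≤ i := by omega
      set j := joinNC (xChain n i) y with hjdef
      have hxj : xChain n i ≤ j := le_trans le_sup_left (le_ncClosure _)
      have hyj : y ≤ j := le_trans le_sup_right (le_ncClosure _)
      have h0n1 : (xChain n i).r f0 fn1 :=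
        xChain_rel.mpr (Or.inr ⟨Or.inl (by simp only [hf0]; omega), Or.inr rfl⟩)
      have hj0 : j.r f0 fn1 := Setoid.le_def.mp hxj h0n1
      refine ⟨⟨ncClosure_nc _, ?_, ?_⟩, hxj, hyj, fun z hz hz1 hz2 =>
        ncClosure_le hz.1 (sup_le hz1 hz2)⟩
      · rintro ⟨a, hB⟩
        have h1m : fn1 ∈ {b | j.r a b} := by
          rw [← hB]; exact Or.inr rfl
        have h0m : j.r a f0 := j.trans' h1m (j.symm' hj0)
        have : f0 ∈ {x : Fin n | x.val = n - 2 ∨ x.val = n - 1} := by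
          rw [hB]; exact h0m
        rcases this with h | h <;> simp only [hf0] at h <;> omega
      · rintro ⟨⟨a, hB⟩, -⟩
        have h1m : fn1 ∈ {b | j.r a b} := by
          rw [← hB]; exact rfl
        have h0m : j.r a f0 := j.trans' h1m (j.symm' hj0)
        have : f0 ∈ {x : Fin n | x.val = n - 1} := by rw [hB]; exact h0m
        simp only [hf0, Set.mem_setOf_eq] at this; omega
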